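/- arXiv:2107.10927 — 2 statements merged into one kernel-verified Lean document; each statement's English description precedes it below -/
import Mathlib

section
/- Let L be a real symmetric n×n matrix, E the n×q indicator matrix of a partition of {1,…,n} into nonempty clusters, and L = V D Vᵀ with V orthogonal, V = [V_ρ, V_ν], where EᵀV_ρ = 0 (redundant eigenvectors) and each column of V_ν is of the form Ew for some w ∈ ℝ^q (non-redundant eigenvectors). For θ ∈ ℝⁿ let η = Vᵀθ, partitioned as η = (η_ρ, η_ν). Then θ − E(EᵀE)⁻¹Eᵀθ = V_ρ η_ρ; that is, the deviation ε_i = θ_i − θ̃_{i*} of each nodal displacement from the average displacement of its cluster is given by ε_i = Σ_{j redundant} V_{ij} η_j, a linear combination of the redundant modes only. -/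
open Matrix

/-- The deviation of the nodal displacements from their cluster averages,
`θ - E(EᵀE)⁻¹Eᵀθ`, is a linear combination of the redundant modes only:
it equals `V_ρ η_ρ` where `η = Vᵀθ`. -/
theorem deviation_is_redundant_modes {n q r s : ℕ}
    (L : Matrix (Fin n) (Fin n) ℝ)
    (φ : Fin n → Fin q) (hsurj : Function.Surjective φ)
    (E : Matrix (Fin n) (Fin q) ℝ)
    (hE : ∀ i c, E i c = if φ i = c then 1 else 0)
    (V : Matrix (Fin n) (Fin r ⊕ Fin s) ℝ)
    (Dρ : Fin r → ℝ) (Dν : Fin s → ℝ)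
    (horth1 : Vᵀ * V = 1) (horth2 : V * Vᵀ = 1)
    (hdecomp : L = V * Matrix.diagonal (Sum.elim Dρ Dν) * Vᵀ)
    (hred : Eᵀ * V.submatrix id Sum.inl = 0)
    (hnonred : ∀ k : Fin s, ∃ w : Fin q → ℝ,
      (fun i => V i (Sum.inr k)) = E.mulVec w)
    (θ : Fin n → ℝ) :
    θ - E.mulVec (((Eᵀ * E)⁻¹ * Eᵀ).mulVec θ) =
      (V.submatrix id Sum.inl).mulVec (fun k => Vᵀ.mulVec θ (Sum.inl k)) := by
  classical
  set Vρ := V.submatrix id Sum.inl with hVρ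
  set Vν := V.submatrix id Sum.inr with hVν
  choose w hw using hnonred
  set W : Matrix (Fin q) (Fin s) ℝ := fun c k => w k c with hW
  have hVνE : Vν = E * W := by
    ext i k
    have := congrFun (hw k) i
    rw [Matrix.mul_apply]
    simpa [Vν, Matrix.mul_apply, Matrix.mulVec, dotProduct, W, mul_comm] using this
  have hEE : Eᵀ * E = Matrix.diagonal
      (fun c => ((Finset.univ.filter (fun i => φ i = c)).card : ℝ)) := by
    ext c d
    by_cases h : c = d
    · subst h
      rw [Matrix.mul_apply, Matrix.diagonal_apply_eq, Finset.card_filter]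
      push_cast
      refine Finset.sum_congr rfl fun i _ => ?_
      simp only [Matrix.transpose_apply, hE]
      by_cases hc : φ i = c <;> simp [hc]
    · rw [Matrix.mul_apply, Matrix.diagonal_apply_ne _ h]
      refine Finset.sum_eq_zero fun i _ => ?_
      simp only [Matrix.transpose_apply, hE]
      by_cases hc : φ i = c <;> by_cases hd : φ i = d <;> simp_all
  have hdet : IsUnit (Eᵀ * E).det := by
    rw [hEE, Matrix.det_diagonal]
    refine isUnit_iff_ne_zero.2 (Finset.prod_ne_zero_iff.2 fun c _ => ?_)
    have : (Finset.univ.filter (fun i => φ i = c)).Nonempty := by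
      obtain ⟨i, hi⟩ := hsurj c
      exact ⟨i, by simp [hi]⟩
    have := Finset.card_pos.2 this
    exact_mod_cast this.ne'
  have hinv : (Eᵀ * E)⁻¹ * (Eᵀ * E) = 1 := Matrix.nonsing_inv_mul _ hdet
  set P : Matrix (Fin n) (Fin n) ℝ := E * ((Eᵀ * E)⁻¹ * Eᵀ) with hP
  have hPVρ : P * Vρ = 0 := by
    rw [hP, Matrix.mul_assoc, Matrix.mul_assoc, hred, Matrix.mul_zero, Matrix.mul_zero]
  have hPVν : P * Vν = Vν := by
    rw [hVνE, hP]
    calc E * ((Eᵀ * E)⁻¹ * Eᵀ) * (E * W)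
        = E * (((Eᵀ * E)⁻¹ * (Eᵀ * E)) * W) := by
          simp only [Matrix.mul_assoc]
      _ = E * W := by rw [hinv, Matrix.one_mul]
  have hsplit : Vρ * Vρᵀ + Vν * Vνᵀ = 1 := by
    rw [← horth2]
    ext i j
    simp [Matrix.mul_apply, Matrix.add_apply, Fintype.sum_sum_type, Vρ, Vν]
  have hPeq : P = Vν * Vνᵀ := by
    calc P = P * (Vρ * Vρᵀ + Vν * Vνᵀ) := by rw [hsplit, Matrix.mul_one]
      _ = P * Vρ * Vρᵀ + P * Vν * Vνᵀ := by
          rw [Matrix.mul_add, ← Matrix.mul_assoc, ← Matrix.mul_assoc]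
      _ = Vν * Vνᵀ := by rw [hPVρ, hPVν, Matrix.zero_mul, zero_add]
  have hkey : (1 : Matrix (Fin n) (Fin n) ℝ) - P = Vρ * Vρᵀ := by
    rw [hPeq, ← hsplit, add_sub_cancel_right]
  have hRHS : (fun k => Vᵀ.mulVec θ (Sum.inl k)) = Vρᵀ.mulVec θ := by
    funext k
    simp [Matrix.mulVec, dotProduct, Vρ, Matrix.transpose_apply]
  rw [hRHS, Matrix.mulVec_mulVec, Matrix.mulVec_mulVec, ← hkey, Matrix.sub_mulVec,
    Matrix.one_mulVec, hP, ← Matrix.mulVec_mulVec]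
end

section
/- Let G be a finite group of permutations of {1,…,n} and L a real n×n matrix with L_{σ(i)σ(j)} = L_{ij} for all σ ∈ G; let S_1,…,S_q be the orbits of G, E the indicator matrix, L̃ = (EᵀE)⁻¹EᵀLE, γ > 0 and p ∈ ℝⁿ with p̃ = (EᵀE)⁻¹Eᵀp. If θ : ℝ → ℝⁿ is a solution of the linear swing equation θ̈(t) = −γ θ̇(t) + L θ(t) + p, then the vector of cluster averages θ̃(t) = (EᵀE)⁻¹Eᵀθ(t) solves the quotient-network equation θ̃̈(t) = −γ θ̃̇(t) + L̃ θ̃(t) + p̃. -/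
open Matrix

/-- If `G` is a group of permutation symmetries of `L`, and `θ` solves the linear
swing equation `θ̈ = -γθ̇ + Lθ + p`, then the vector of cluster averages
`θ̃ = (EᵀE)⁻¹Eᵀθ` solves the quotient-network equation
`θ̃̈ = -γθ̃̇ + L̃θ̃ + p̃`, with `L̃ = (EᵀE)⁻¹EᵀLE` and `p̃ = (EᵀE)⁻¹Eᵀp`. -/
theorem cluster_averages_solve_quotient {n q : ℕ}
    (G : Subgroup (Equiv.Perm (Fin n)))
    (L : Matrix (Fin n) (Fin n) ℝ)
    (hL : ∀ σ ∈ G, ∀ i j, L (σ i) (σ j) = L i j)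
    (φ : Fin n → Fin q) (hsurj : Function.Surjective φ)
    (horb : ∀ i j, φ i = φ j ↔ ∃ σ ∈ G, σ i = j)
    (E : Matrix (Fin n) (Fin q) ℝ)
    (hE : ∀ i c, E i c = if φ i = c then 1 else 0)
    (γ : ℝ) (hγ : 0 < γ) (p : Fin n → ℝ)
    (θ θ' θ'' : ℝ → Fin n → ℝ)
    (hθ1 : ∀ i t, HasDerivAt (fun s => θ s i) (θ' t i) t)
    (hθ2 : ∀ i t, HasDerivAt (fun s => θ' s i) (θ'' t i) t)
    (hode : ∀ t, θ'' t = -γ • θ' t + L.mulVec (θ t) + p) :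
    (∀ (c : Fin q) (t : ℝ), HasDerivAt
      (fun s => ((Eᵀ * E)⁻¹ * Eᵀ).mulVec (θ s) c)
      (((Eᵀ * E)⁻¹ * Eᵀ).mulVec (θ' t) c) t) ∧
    (∀ (c : Fin q) (t : ℝ), HasDerivAt
      (fun s => ((Eᵀ * E)⁻¹ * Eᵀ).mulVec (θ' s) c)
      (((Eᵀ * E)⁻¹ * Eᵀ).mulVec (θ'' t) c) t) ∧
    (∀ t : ℝ, ((Eᵀ * E)⁻¹ * Eᵀ).mulVec (θ'' t) =
      -γ • ((Eᵀ * E)⁻¹ * Eᵀ).mulVec (θ' t) +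
        ((Eᵀ * E)⁻¹ * Eᵀ * L * E).mulVec (((Eᵀ * E)⁻¹ * Eᵀ).mulVec (θ t)) +
        ((Eᵀ * E)⁻¹ * Eᵀ).mulVec p) := by
  classical
  set M : Matrix (Fin q) (Fin n) ℝ := (Eᵀ * E)⁻¹ * Eᵀ with hM
  -- derivative parts
  have hmv : ∀ (A : Matrix (Fin q) (Fin n) ℝ) (v : Fin n → ℝ) (c : Fin q),
      A.mulVec v c = ∑ j, A c j * v j := by
    intro A v c; simp [Matrix.mulVec, dotProduct]
  have hd1 : ∀ (c : Fin q) (t : ℝ), HasDerivAt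
      (fun s => M.mulVec (θ s) c) (M.mulVec (θ' t) c) t := by
    intro c t
    have h := HasDerivAt.fun_sum (u := Finset.univ)
      (fun j _ => (hθ1 j t).const_mul (M c j))
    simpa [hmv] using h
  have hd2 : ∀ (c : Fin q) (t : ℝ), HasDerivAt
      (fun s => M.mulVec (θ' s) c) (M.mulVec (θ'' t) c) t := by
    intro c t
    have h := HasDerivAt.fun_sum (u := Finset.univ)
      (fun j _ => (hθ2 j t).const_mul (M c j))
    simpa [hmv] using h
  -- representative of each cluster
  have rep : ∀ c : Fin q, ∃ i, φ i = c := fun c => hsurj c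
  choose r hr using rep
  -- column-sum invariance
  have hsum : ∀ (c : Fin q) (j : Fin n),
      (∑ i, if φ i = c then L i j else 0) =
      (∑ i, if φ i = c then L i (r (φ j)) else 0) := by
    intro c j
    obtain ⟨σ, hσG, hσ⟩ := (horb (r (φ j)) j).mp (hr (φ j))
    have hφσ : ∀ i, φ (σ i) = φ i := by
      intro i
      exact ((horb i (σ i)).mpr ⟨σ, hσG, rfl⟩).symm
    calc (∑ i, if φ i = c then L i j else 0)
        = ∑ i, if φ (σ i) = c then L (σ i) j else 0 := by
          rw [← Equiv.sum_comp σ (fun i => if φ i = c then L i j else 0)]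
      _ = ∑ i, if φ i = c then L i (r (φ j)) else 0 := by
          refine Finset.sum_congr rfl fun i _ => ?_
          have h := hL σ hσG i (r (φ j))
          rw [hσ] at h
          rw [hφσ i, h]
  -- EᵀE is an invertible diagonal matrix
  have hEE : Eᵀ * E = Matrix.diagonal
      (fun c => ((Finset.univ.filter (fun i => φ i = c)).card : ℝ)) := by
    ext c d
    simp only [Matrix.mul_apply, Matrix.transpose_apply, hE, Matrix.diagonal_apply]
    by_cases hcd : c = d
    · subst hcd
      rw [if_pos rfl]
      have h : ∀ x : Fin n, ((if φ x = c then (1:ℝ) else 0) * (if φ x = c then 1 else 0))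
          = if φ x = c then 1 else 0 := fun x => by by_cases h : φ x = c <;> simp [h]
      rw [Finset.sum_congr rfl fun x _ => h x]
      rw [Finset.sum_boole]
    · rw [if_neg hcd]
      refine Finset.sum_eq_zero fun i _ => ?_
      by_cases h1 : φ i = c
      · simp [h1, hcd]
      · simp [h1]
  have hdet : (Eᵀ * E).det ≠ 0 := by
    rw [hEE, Matrix.det_diagonal]
    refine Finset.prod_ne_zero_iff.mpr fun c _ => ?_
    exact Nat.cast_ne_zero.mpr
      (Finset.card_ne_zero_of_mem (Finset.mem_filter.mpr ⟨Finset.mem_univ _, hr c⟩))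
  have hinv : (Eᵀ * E) * (Eᵀ * E)⁻¹ = 1 :=
    Matrix.mul_nonsing_inv _ (isUnit_iff_ne_zero.mpr hdet)
  -- key intertwining identity
  set K : Matrix (Fin q) (Fin q) ℝ :=
    fun c d => ∑ i, if φ i = c then L i (r d) else 0 with hK
  have hEL : Eᵀ * L = K * Eᵀ := by
    ext c j
    have h1 : (Eᵀ * L) c j = ∑ i, if φ i = c then L i j else 0 := by
      simp only [Matrix.mul_apply, Matrix.transpose_apply, hE]
      exact Finset.sum_congr rfl fun i _ => by split <;> simp
    have h2 : (K * Eᵀ) c j = K c (φ j) := by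
      simp only [Matrix.mul_apply, Matrix.transpose_apply, hE]
      rw [Finset.sum_eq_single (φ j)]
      · simp
      · intro d _ hd; simp [Ne.symm hd]
      · intro h; exact absurd (Finset.mem_univ _) h
    rw [h1, h2, hK, hsum c j]
  have hML : M * L = (Eᵀ * E)⁻¹ * K * Eᵀ := by
    rw [hM, Matrix.mul_assoc, hEL, ← Matrix.mul_assoc]
  have key : M * L * E * M = M * L := by
    rw [hML, hM]
    calc (Eᵀ * E)⁻¹ * K * Eᵀ * E * ((Eᵀ * E)⁻¹ * Eᵀ)
        = (Eᵀ * E)⁻¹ * K * (Eᵀ * E * (Eᵀ * E)⁻¹) * Eᵀ := by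
          simp only [Matrix.mul_assoc]
      _ = (Eᵀ * E)⁻¹ * K * Eᵀ := by rw [hinv, Matrix.mul_one]
  refine ⟨hd1, hd2, fun t => ?_⟩
  rw [hode t]
  have hLθ : M.mulVec (L.mulVec (θ t)) = (M * L * E).mulVec (M.mulVec (θ t)) := by
    rw [Matrix.mulVec_mulVec, Matrix.mulVec_mulVec, key]
  simp only [Matrix.mulVec_add, Matrix.mulVec_smul, hLθ]
end
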